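/- Let r be an odd integer with r ≥ 3 and n ≥ 2, and let W ⊆ 2^{[n]} be a weakly r-separated collection. For an integer i, let T^i := {A ⊆ [n−1] : |A| = i, A ∈ W, and A∪{n} ∈ W}. Then T^i is an (r−1)-separated collection; moreover, T^i is a weakly (r−2)-separated collection. -/
import Mathlib


open Finset

/-- An alternating sequence for the pair of sets `A`, `B`: a strictly increasing
sequence whose odd-position elements lie in one of `A \ B`, `B \ A` and whose
even-position elements lie in the other. -/
def IsAltSeq (A B : Finset ℕ) {m : ℕ} (f : Fin m → ℕ) : Prop :=
  StrictMono f ∧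
    ((∀ j : Fin m, (j : ℕ) % 2 = 0 → f j ∈ A \ B) ∧
        (∀ j : Fin m, (j : ℕ) % 2 = 1 → f j ∈ B \ A) ∨
      (∀ j : Fin m, (j : ℕ) % 2 = 0 → f j ∈ B \ A) ∧
        (∀ j : Fin m, (j : ℕ) % 2 = 1 → f j ∈ A \ B))

/-- `altLen A B` is the maximum length of an alternating sequence for `A`, `B`. -/
noncomputable def altLen (A B : Finset ℕ) : ℕ :=
  sSup {m : ℕ | ∃ f : Fin m → ℕ, IsAltSeq A B f}

/-- `A` surrounds `B`:  `min (A \ B) < min (B \ A)` and `max (B \ A) < max (A \ B)`. -/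
def Surrounds (A B : Finset ℕ) : Prop :=
  (A \ B).min < (B \ A).min ∧ (B \ A).max < (A \ B).max

/-- Weak `r`-separation for an odd `r`. -/
def WeaklySep (r : ℕ) (A B : Finset ℕ) : Prop :=
  altLen A B ≤ r + 2 ∧
    (altLen A B = r + 2 →
      Surrounds A B ∧ A.card ≤ B.card ∨ Surrounds B A ∧ B.card ≤ A.card)

/-- An oriented alternating sequence: even positions in `X`, odd positions in `Y`. -/
def IsAlt (X Y : Finset ℕ) {m : ℕ} (f : Fin m → ℕ) : Prop :=
  StrictMono f ∧ (∀ j : Fin m, (j : ℕ) % 2 = 0 → f j ∈ X) ∧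
    (∀ j : Fin m, (j : ℕ) % 2 = 1 → f j ∈ Y)

lemma isAltSeq_iff {A B : Finset ℕ} {m : ℕ} {f : Fin m → ℕ} :
    IsAltSeq A B f ↔ IsAlt (A \ B) (B \ A) f ∨ IsAlt (B \ A) (A \ B) f := by
  unfold IsAltSeq IsAlt; tauto

lemma isAlt_mem {X Y : Finset ℕ} {m : ℕ} {f : Fin m → ℕ} (h : IsAlt X Y f) (j : Fin m) :
    f j ∈ X ∪ Y := by
  rcases Nat.mod_two_eq_zero_or_one (j : ℕ) with hj | hj
  · exact mem_union_left _ (h.2.1 j hj)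
  · exact mem_union_right _ (h.2.2 j hj)

lemma bddAbove_altSet (A B : Finset ℕ) :
    BddAbove {m : ℕ | ∃ f : Fin m → ℕ, IsAltSeq A B f} := by
  refine ⟨(A ∪ B).card, ?_⟩
  rintro m ⟨f, hf⟩
  have hmono : StrictMono f := hf.1
  have hmem : ∀ j, f j ∈ A ∪ B := by
    intro j
    rcases isAltSeq_iff.1 hf with h | h <;>
    · have := isAlt_mem h j
      rw [mem_union, mem_sdiff, mem_sdiff] at this
      rw [mem_union]
      tauto
  have := Finset.card_le_card_of_injOn (s := Finset.univ) f (fun a _ => hmem a)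
    hmono.injective.injOn
  simpa using this

lemma le_altLen {A B : Finset ℕ} {m : ℕ} (f : Fin m → ℕ) (hf : IsAltSeq A B f) :
    m ≤ altLen A B :=
  le_csSup (bddAbove_altSet A B) ⟨f, hf⟩

lemma exists_isAltSeq (A B : Finset ℕ) :
    ∃ f : Fin (altLen A B) → ℕ, IsAltSeq A B f := by
  have hne : {m : ℕ | ∃ f : Fin m → ℕ, IsAltSeq A B f}.Nonempty :=
    ⟨0, Fin.elim0, fun a b h => a.elim0, Or.inl ⟨fun j => j.elim0, fun j => j.elim0⟩⟩
  exact Nat.sSup_mem hne (bddAbove_altSet A B)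

lemma isAltSeq_restrict {A B : Finset ℕ} {m k : ℕ} (hk : k ≤ m) {f : Fin m → ℕ}
    (hf : IsAltSeq A B f) : ∃ g : Fin k → ℕ, IsAltSeq A B g := by
  refine ⟨fun j => f ⟨j, lt_of_lt_of_le j.isLt hk⟩, ?_, ?_⟩
  · intro a b hab
    exact hf.1 (show ((⟨(a : ℕ), _⟩ : Fin m) < ⟨(b : ℕ), _⟩) from hab)
  · rcases hf.2 with ⟨h0, h1⟩ | ⟨h0, h1⟩
    · exact Or.inl ⟨fun j hj => h0 _ hj, fun j hj => h1 _ hj⟩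
    · exact Or.inr ⟨fun j hj => h0 _ hj, fun j hj => h1 _ hj⟩

lemma isAlt_snoc {X Y X' Y' : Finset ℕ} {m : ℕ} {f : Fin m → ℕ} {x : ℕ}
    (h : IsAlt X Y f) (hX : X ⊆ X') (hY : Y ⊆ Y') (hlt : ∀ j, f j < x)
    (hx0 : m % 2 = 0 → x ∈ X') (hx1 : m % 2 = 1 → x ∈ Y') :
    ∃ g : Fin (m + 1) → ℕ, IsAlt X' Y' g ∧ ∀ j, g j = x ∨ ∃ j₀, g j = f j₀ := by
  refine ⟨fun j => if hj : (j : ℕ) < m then f ⟨j, hj⟩ else x, ⟨?_, ?_, ?_⟩, ?_⟩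
  · intro a b hab
    have hab' : (a : ℕ) < (b : ℕ) := hab
    have ha2 := a.isLt
    have hb2 := b.isLt
    by_cases ha : (a : ℕ) < m <;> by_cases hb : (b : ℕ) < m
    · simp only []
      rw [dif_pos ha, dif_pos hb]
      exact h.1 (show ((⟨(a : ℕ), ha⟩ : Fin m) < ⟨(b : ℕ), hb⟩) from hab')
    · simp only []
      rw [dif_pos ha, dif_neg hb]
      exact hlt _
    · omega
    · omega
  · intro j hj
    by_cases hjm : (j : ℕ) < m
    · simp only []
      rw [dif_pos hjm]
      exact hX (h.2.1 _ hj)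
    · simp only []
      rw [dif_neg hjm]
      have hje : (j : ℕ) = m := by have := j.isLt; omega
      exact hx0 (hje ▸ hj)
  · intro j hj
    by_cases hjm : (j : ℕ) < m
    · simp only []
      rw [dif_pos hjm]
      exact hY (h.2.2 _ hj)
    · simp only []
      rw [dif_neg hjm]
      have hje : (j : ℕ) = m := by have := j.isLt; omega
      exact hx1 (hje ▸ hj)
  · intro j
    by_cases hjm : (j : ℕ) < m
    · exact Or.inr ⟨⟨j, hjm⟩, dif_pos hjm⟩
    · exact Or.inl (dif_neg hjm)

lemma isAlt_cons {X Y X' Y' : Finset ℕ} {m : ℕ} {f : Fin m → ℕ} {x : ℕ}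
    (h : IsAlt X Y f) (hX : X ⊆ X') (hY : Y ⊆ Y') (hlt : ∀ j, x < f j) (hx : x ∈ Y') :
    ∃ g : Fin (m + 1) → ℕ, IsAlt Y' X' g ∧ ∀ j, g j = x ∨ ∃ j₀, g j = f j₀ := by
  refine ⟨fun j => if hj : (j : ℕ) = 0 then x
      else f ⟨(j : ℕ) - 1, by have := j.isLt; omega⟩, ⟨?_, ?_, ?_⟩, ?_⟩
  · intro a b hab
    have hab' : (a : ℕ) < (b : ℕ) := hab
    have hb0 : ¬ (b : ℕ) = 0 := by omega
    by_cases ha : (a : ℕ) = 0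
    · simp only []
      rw [dif_pos ha, dif_neg hb0]
      exact hlt _
    · simp only []
      rw [dif_neg ha, dif_neg hb0]
      refine h.1 (Fin.mk_lt_mk.mpr ?_)
      omega
  · intro j hj
    by_cases hj0 : (j : ℕ) = 0
    · simp only []
      rw [dif_pos hj0]
      exact hx
    · simp only []
      rw [dif_neg hj0]
      exact hY (h.2.2 _ (show ((j : ℕ) - 1) % 2 = 1 by omega))
  · intro j hj
    have hj0 : ¬ (j : ℕ) = 0 := by omega
    simp only []
    rw [dif_neg hj0]
    exact hX (h.2.1 _ (show ((j : ℕ) - 1) % 2 = 0 by omega))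
  · intro j
    by_cases hj0 : (j : ℕ) = 0
    · exact Or.inl (dif_pos hj0)
    · exact Or.inr ⟨_, dif_neg hj0⟩

lemma noext_aux (r n i : ℕ) (hr3 : 3 ≤ r) (W : Finset (Finset ℕ))
    (hWsep : ∀ A ∈ W, ∀ B ∈ W, WeaklySep r A B)
    (C D : Finset ℕ) (hC : C ⊆ Finset.Icc 1 (n - 1)) (hD : D ⊆ Finset.Icc 1 (n - 1))
    (hCcard : C.card = i) (hDcard : D.card = i)
    (hCW : C ∈ W) (hD'W : insert n D ∈ W) :
    altLen C (insert n D) ≤ r + 1 := by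
  have hnotmem : ∀ a ∈ Finset.Icc 1 (n - 1), a < n := by
    intro a ha; rw [mem_Icc] at ha; omega
  have hnC : n ∉ C := fun hmem => absurd (hnotmem n (hC hmem)) (lt_irrefl n)
  have hnD : n ∉ D := fun hmem => absurd (hnotmem n (hD hmem)) (lt_irrefl n)
  have h := hWsep C hCW (insert n D) hD'W
  by_contra hcon
  push_neg at hcon
  have heq : altLen C (insert n D) = r + 2 := le_antisymm h.1 (by omega)
  have hmax1 : ((n : ℕ) : WithBot ℕ) ≤ (insert n D \ C).max :=
    Finset.le_max (mem_sdiff.mpr ⟨mem_insert_self n D, hnC⟩)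
  have hmax2 : (C \ insert n D).max < ((n : ℕ) : WithBot ℕ) := by
    rcases (C \ insert n D).eq_empty_or_nonempty with he | hne
    · rw [he, Finset.max_empty]
      exact WithBot.bot_lt_coe n
    · rw [← Finset.coe_max' hne]
      exact WithBot.coe_lt_coe.mpr
        (hnotmem _ (hC (mem_sdiff.mp ((C \ insert n D).max'_mem hne)).1))
  rcases h.2 heq with ⟨hs, -⟩ | ⟨-, hcard⟩
  · exact absurd (lt_trans hs.2 hmax2) (not_lt.2 hmax1)
  · rw [Finset.card_insert_of_notMem hnD, hCcard, hDcard] at hcard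
    omega

lemma core_surrounds (r n : ℕ) (hr2 : r % 2 = 1) (hr3 : 3 ≤ r)
    (A B : Finset ℕ) (hAn : ∀ a ∈ A, a < n) (hBn : ∀ a ∈ B, a < n)
    (noAB : altLen A (insert n B) ≤ r + 1)
    (noBA : altLen B (insert n A) ≤ r + 1)
    (g : Fin r → ℕ) (hg : IsAlt (A \ B) (B \ A) g) :
    Surrounds A B := by
  have hnA : n ∉ A := fun h => lt_irrefl n (hAn n h)
  have hnB : n ∉ B := fun h => lt_irrefl n (hBn n h)
  have hsub1 : A \ B ⊆ A \ insert n B := by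
    intro x hx; rw [mem_sdiff] at hx; rw [mem_sdiff, mem_insert]
    exact ⟨hx.1, fun hc => hc.elim (fun he => by have := hAn x hx.1; omega) hx.2⟩
  have hsub2 : B \ A ⊆ insert n B \ A := by
    intro x hx; rw [mem_sdiff] at hx; rw [mem_sdiff]
    exact ⟨mem_insert_of_mem hx.1, hx.2⟩
  have hsub3 : B \ A ⊆ B \ insert n A := by
    intro x hx; rw [mem_sdiff] at hx; rw [mem_sdiff, mem_insert]
    exact ⟨hx.1, fun hc => hc.elim (fun he => by have := hBn x hx.1; omega) hx.2⟩
  have hsub4 : A \ B ⊆ insert n A \ B := by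
    intro x hx; rw [mem_sdiff] at hx; rw [mem_sdiff]
    exact ⟨mem_insert_of_mem hx.1, hx.2⟩
  have hnmem1 : n ∈ insert n B \ A := mem_sdiff.mpr ⟨mem_insert_self _ _, hnA⟩
  have hnmem2 : n ∈ insert n A \ B := mem_sdiff.mpr ⟨mem_insert_self _ _, hnB⟩
  have hglt : ∀ j, g j < n := by
    intro j
    have := isAlt_mem hg j
    rw [mem_union, mem_sdiff, mem_sdiff] at this
    rcases this with hh | hh
    exacts [hAn _ hh.1, hBn _ hh.1]
  have h0r : (0 : ℕ) < r := by omega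
  have h1r : (1 : ℕ) < r := by omega
  have hXne : (A \ B).Nonempty := ⟨g ⟨0, h0r⟩, hg.2.1 ⟨0, h0r⟩ rfl⟩
  have hYne : (B \ A).Nonempty := ⟨g ⟨1, h1r⟩, hg.2.2 ⟨1, h1r⟩ rfl⟩
  have hdisj : ∀ x, x ∈ A \ B → x ∈ B \ A → False := by
    intro x h1 h2; rw [mem_sdiff] at h1 h2; exact h2.2 h1.1
  constructor
  · -- min part
    by_contra hmin
    rw [← Finset.coe_min' hXne, ← Finset.coe_min' hYne, not_lt] at hmin
    have hmin' : (B \ A).min' hYne ≤ (A \ B).min' hXne := by exact_mod_cast hmin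
    set y0 := (B \ A).min' hYne with hy0
    have hy0mem : y0 ∈ B \ A := Finset.min'_mem _ _
    have hy0lt : y0 < (A \ B).min' hXne :=
      lt_of_le_of_ne hmin' (fun he => hdisj y0 (by rw [he]; exact Finset.min'_mem _ _) hy0mem)
    have hy0ltg : ∀ j, y0 < g j := by
      intro j
      have h1 : g ⟨0, h0r⟩ ≤ g j := hg.1.monotone (by rw [Fin.le_def]; exact Nat.zero_le _)
      have h2 : (A \ B).min' hXne ≤ g ⟨0, h0r⟩ := Finset.min'_le _ _ (hg.2.1 ⟨0, h0r⟩ rfl)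
      omega
    obtain ⟨g1, hg1, hr1⟩ := isAlt_cons hg hsub1 hsub2 hy0ltg (hsub2 hy0mem)
    have hg1lt : ∀ j, g1 j < n := by
      intro j
      rcases hr1 j with he | ⟨j0, he⟩ <;> rw [he]
      · exact hBn y0 (mem_sdiff.mp hy0mem).1
      · exact hglt j0
    obtain ⟨g2, hg2, -⟩ := isAlt_snoc hg1 (subset_refl _) (subset_refl _) hg1lt
      (fun _ => hnmem1) (fun hc => absurd hr2 (by omega))
    have := le_altLen g2 (isAltSeq_iff.mpr (Or.inr hg2))
    omega
  · -- max part
    by_contra hmax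
    rw [← Finset.coe_max' hXne, ← Finset.coe_max' hYne, not_lt] at hmax
    have hmax' : (A \ B).max' hXne ≤ (B \ A).max' hYne := by exact_mod_cast hmax
    set y1 := (B \ A).max' hYne with hy1
    have hy1mem : y1 ∈ B \ A := Finset.max'_mem _ _
    have hx1lt : (A \ B).max' hXne < y1 :=
      lt_of_le_of_ne hmax' (fun he => hdisj _ (Finset.max'_mem _ _) (he ▸ hy1mem))
    have hglty1 : ∀ j, g j < y1 := by
      intro j
      have hjle : j ≤ (⟨r - 1, by omega⟩ : Fin r) := by
        rw [Fin.le_def]; have := j.isLt; simp; omega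
      have h1 : g j ≤ g ⟨r - 1, by omega⟩ := hg.1.monotone hjle
      have hlast : g ⟨r - 1, by omega⟩ ∈ A \ B := hg.2.1 _ (show (r - 1) % 2 = 0 by omega)
      have h2 : g ⟨r - 1, by omega⟩ ≤ (A \ B).max' hXne := Finset.le_max' _ _ hlast
      omega
    obtain ⟨g1, hg1, hr1⟩ := isAlt_snoc hg (subset_refl _) (subset_refl _) hglty1
      (fun hc => absurd hr2 (by omega)) (fun _ => hy1mem)
    have hg1lt : ∀ j, g1 j < n := by
      intro j
      rcases hr1 j with he | ⟨j0, he⟩ <;> rw [he]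
      · exact hBn y1 (mem_sdiff.mp hy1mem).1
      · exact hglt j0
    obtain ⟨g2, hg2, -⟩ := isAlt_snoc hg1 hsub4 hsub3 hg1lt
      (fun _ => hnmem2) (fun hc => absurd hr2 (by omega))
    have := le_altLen g2 (isAltSeq_iff.mpr (Or.inr hg2))
    omega

/-- (Claim 1) for each i, the collection of twins
T^i = {A ⊆ [n-1] : |A| = i, A ∈ W, A ∪ {n} ∈ W} is (r-1)-separated,
and moreover weakly (r-2)-separated. -/
theorem twins_level_separated (r n : ℕ) (hr : Odd r) (hr3 : 3 ≤ r) (hn : 2 ≤ n)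
    (W : Finset (Finset ℕ)) (hWsub : ∀ A ∈ W, A ⊆ Finset.Icc 1 n)
    (hWsep : ∀ A ∈ W, ∀ B ∈ W, WeaklySep r A B) (i : ℕ) :
    ∀ A B : Finset ℕ,
      A ⊆ Finset.Icc 1 (n - 1) → A.card = i → A ∈ W → insert n A ∈ W →
      B ⊆ Finset.Icc 1 (n - 1) → B.card = i → B ∈ W → insert n B ∈ W →
      altLen A B ≤ (r - 1) + 1 ∧ WeaklySep (r - 2) A B := by
  intro A B hA hAc hAW hA'W hB hBc hBW hB'W
  have hr2 : r % 2 = 1 := Nat.odd_iff.mp hr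
  have hAn : ∀ a ∈ A, a < n := fun a ha => by have := hA ha; rw [mem_Icc] at this; omega
  have hBn : ∀ a ∈ B, a < n := fun a ha => by have := hB ha; rw [mem_Icc] at this; omega
  have hnA : n ∉ A := fun h => lt_irrefl n (hAn n h)
  have hnB : n ∉ B := fun h => lt_irrefl n (hBn n h)
  have noAB : altLen A (insert n B) ≤ r + 1 :=
    noext_aux r n i hr3 W hWsep A B hA hB hAc hBc hAW hB'W
  have noBA : altLen B (insert n A) ≤ r + 1 :=
    noext_aux r n i hr3 W hWsep B A hB hA hBc hAc hBW hA'W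
  have hsub1 : A \ B ⊆ A \ insert n B := by
    intro x hx; rw [mem_sdiff] at hx; rw [mem_sdiff, mem_insert]
    exact ⟨hx.1, fun hc => hc.elim (fun he => by have := hAn x hx.1; omega) hx.2⟩
  have hsub2 : B \ A ⊆ insert n B \ A := by
    intro x hx; rw [mem_sdiff] at hx; rw [mem_sdiff]
    exact ⟨mem_insert_of_mem hx.1, hx.2⟩
  have hsub3 : B \ A ⊆ B \ insert n A := by
    intro x hx; rw [mem_sdiff] at hx; rw [mem_sdiff, mem_insert]
    exact ⟨hx.1, fun hc => hc.elim (fun he => by have := hBn x hx.1; omega) hx.2⟩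
  have hsub4 : A \ B ⊆ insert n A \ B := by
    intro x hx; rw [mem_sdiff] at hx; rw [mem_sdiff]
    exact ⟨mem_insert_of_mem hx.1, hx.2⟩
  have hnmem1 : n ∈ insert n B \ A := mem_sdiff.mpr ⟨mem_insert_self _ _, hnA⟩
  have hnmem2 : n ∈ insert n A \ B := mem_sdiff.mpr ⟨mem_insert_self _ _, hnB⟩
  have step1 : altLen A B ≤ r := by
    by_contra hcon
    push_neg at hcon
    obtain ⟨f, hf⟩ := exists_isAltSeq A B
    obtain ⟨g, hg⟩ := isAltSeq_restrict (show r + 1 ≤ altLen A B by omega) hf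
    rcases isAltSeq_iff.1 hg with h | h
    · have hglt : ∀ j, g j < n := by
        intro j
        have := isAlt_mem h j
        rw [mem_union, mem_sdiff, mem_sdiff] at this
        rcases this with hh | hh
        exacts [hAn _ hh.1, hBn _ hh.1]
      obtain ⟨g2, hg2, -⟩ := isAlt_snoc h hsub4 hsub3 hglt
        (fun _ => hnmem2) (fun hc => absurd hr2 (by omega))
      have := le_altLen g2 (isAltSeq_iff.mpr (Or.inr hg2))
      omega
    · have hglt : ∀ j, g j < n := by
        intro j
        have := isAlt_mem h j
        rw [mem_union, mem_sdiff, mem_sdiff] at this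
        rcases this with hh | hh
        exacts [hBn _ hh.1, hAn _ hh.1]
      obtain ⟨g2, hg2, -⟩ := isAlt_snoc h hsub2 hsub1 hglt
        (fun _ => hnmem1) (fun hc => absurd hr2 (by omega))
      have := le_altLen g2 (isAltSeq_iff.mpr (Or.inr hg2))
      omega
  refine ⟨by omega, ⟨by omega, ?_⟩⟩
  intro heq
  have heqr : altLen A B = r := by omega
  obtain ⟨f, hf⟩ := exists_isAltSeq A B
  obtain ⟨g, hg⟩ := isAltSeq_restrict (le_of_eq heqr.symm) hf
  rcases isAltSeq_iff.1 hg with h | h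
  · exact Or.inl ⟨core_surrounds r n hr2 hr3 A B hAn hBn noAB noBA g h, by rw [hAc, hBc]⟩
  · exact Or.inr ⟨core_surrounds r n hr2 hr3 B A hBn hAn noBA noAB g h, by rw [hAc, hBc]⟩
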